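/- Let B be a Boolean formula in CNF with variables v_1,…,v_n and clauses c_1,…,c_m, where every clause has exactly three literals and every variable occurs exactly twice unnegated and exactly twice negated in B. Let α ≥ 1 be an integer and D = 6n(α−1)+1. Construct the CACR instance I with lexicographic preferences as follows: courses X ∪ Y ∪ Z with X = {x_i^1, x_i^2, x̄_i^1, x̄_i^2 : 1 ≤ i ≤ n}, Y = {y_i^1, y_i^2 : 1 ≤ i ≤ n}, Z = {z_1,…,z_D}, each of capacity 1; corequisites: y_i^1 ↔ y_i^2 for each i, and all courses of Z are mutually corequisite, all other courses forming singleton classes; applicants A ∪ G ∪ {h, b} with A = {a_j : 1 ≤ j ≤ m}, each of capacity 1, G = {g_i^1, g_i^2 : 1 ≤ i ≤ n}, each of capacity 2, h of capacity 2n − m, and b of capacity D; for 1 ≤ j ≤ m and 1 ≤ s ≤ 3 let x(c_j^s) denote the X-course corresponding to the literal occurrence at position s of clause c_j; preference lists P(a_j): x(c_j^1), x(c_j^2), x(c_j^3); P(g_i^1): y_i^1, y_i^2, x_i^1, x_i^2; P(g_i^2): y_i^1, y_i^2, x̄_i^1, x̄_i^2; P(h): all courses of X in some fixed order; P(b): all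 courses of X in some fixed order followed by all courses of Z in some fixed order. Then: (a) if B is satisfiable, then I admits a Pareto optimal matching of cardinality D + 6n; and (b) if B is not satisfiable, then every Pareto optimal matching of I has cardinality at most 6n. -/

import Mathlib

open Finset

def bundle {A C : Type*} [DecidableEq A] [DecidableEq C]
    (M : Finset (A × C)) (a : A) : Finset C :=
  (M.filter fun p => p.1 = a).image Prod.snd

def slots {A C : Type*} [DecidableEq C] (M : Finset (A × C)) (c : C) : ℕ :=
  (M.filter fun p => p.2 = c).card

/-- Lexicographic comparison of bundles w.r.t. a preference list (earlier = better). -/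
def lexPrefers {C : Type*} [DecidableEq C] (l : List C) (S₁ S₂ : Finset C) : Prop :=
  ∃ c ∈ S₁ \ S₂, ∀ d ∈ (S₁ \ S₂) ∪ (S₂ \ S₁), l.idxOf c ≤ l.idxOf d

def IsFeasibleCR {A C : Type*} (pref : A → List C) (qA : A → ℕ)
    (coreq : C → C → Prop) (a : A) (S : Finset C) : Prop :=
  (∀ c ∈ S, c ∈ pref a) ∧ S.card ≤ qA a ∧
    ∀ c ∈ S, ∀ c', coreq c c' → c' ∈ S

def IsMatchingCR {A C : Type*} [DecidableEq A] [DecidableEq C]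
    (pref : A → List C) (qA : A → ℕ) (qC : C → ℕ)
    (coreq : C → C → Prop) (M : Finset (A × C)) : Prop :=
  (∀ a, IsFeasibleCR pref qA coreq a (bundle M a)) ∧ ∀ c, slots M c ≤ qC c

def DominatesCR {A C : Type*} [DecidableEq A] [DecidableEq C]
    (pref : A → List C) (M' M : Finset (A × C)) : Prop :=
  (∃ a, lexPrefers (pref a) (bundle M' a) (bundle M a)) ∧
    ∀ a, ¬ lexPrefers (pref a) (bundle M a) (bundle M' a)

def ParetoOptimalCR {A C : Type*} [DecidableEq A] [DecidableEq C]
    (pref : A → List C) (qA : A → ℕ) (qC : C → ℕ)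
    (coreq : C → C → Prop) (M : Finset (A × C)) : Prop :=
  IsMatchingCR pref qA qC coreq M ∧
    ∀ M', IsMatchingCR pref qA qC coreq M' → ¬ DominatesCR pref M' M

/-- The `X`-courses: `(i, true, r)` is `x_i^{r+1}`, `(i, false, r)` is `x̄_i^{r+1}`. -/
abbrev XCourse (n : ℕ) := Fin n × Bool × Fin 2

/-- The courses of the instance: `X ∪ Y ∪ Z` (the `Y`-course `(i, r)` is `y_i^{r+1}`
and the `Z`-courses are `z_1, …, z_D`). -/
abbrev CourseZ (n D : ℕ) := XCourse n ⊕ ((Fin n × Fin 2) ⊕ Fin D)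

/-- The applicants: `a_j`, the `g_i^1 = Sum.inl (Sum.inr (i, true))`,
`g_i^2 = Sum.inl (Sum.inr (i, false))`, `h = Sum.inr false` and `b = Sum.inr true`. -/
abbrev ApplZ (m n : ℕ) := (Fin m ⊕ (Fin n × Bool)) ⊕ Bool

/-- The corequisite class of a course: `y_i^1 ↔ y_i^2` for each `i`, all courses of
`Z` mutually corequisite, and the `X`-courses in singleton classes. -/
def classOf {n D : ℕ} : CourseZ n D → XCourse n ⊕ (Fin n ⊕ Unit)
  | Sum.inl x => Sum.inl x
  | Sum.inr (Sum.inl y) => Sum.inr (Sum.inl y.1)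
  | Sum.inr (Sum.inr _) => Sum.inr (Sum.inr ())

/-- The corequisite equivalence relation of the instance. -/
def coreqZ {n D : ℕ} (c c' : CourseZ n D) : Prop := classOf c = classOf c'

/-- The `X`-course `x(c_j^s)` corresponding to the literal occurrence at position
`s` of clause `c_j`. -/
def xcZ {m n D : ℕ} (lit : Fin m → Fin 3 → Fin n × Bool)
    (occ : Fin m → Fin 3 → Fin 2) (j : Fin m) (s : Fin 3) : CourseZ n D :=
  Sum.inl ((lit j s).1, (lit j s).2, occ j s)

/-- The preference lists: `P(a_j) : x(c_j^1), x(c_j^2), x(c_j^3)`;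
`P(g_i^1) : y_i^1, y_i^2, x_i^1, x_i^2`; `P(g_i^2) : y_i^1, y_i^2, x̄_i^1, x̄_i^2`;
`P(h) : [X]` (in the fixed order `lX`); `P(b) : [X], [Z]` (in the fixed orders
`lX'` and `lZ`). -/
def prefZ {m n D : ℕ} (lit : Fin m → Fin 3 → Fin n × Bool)
    (occ : Fin m → Fin 3 → Fin 2)
    (lX lX' : List (XCourse n)) (lZ : List (Fin D)) :
    ApplZ m n → List (CourseZ n D)
  | Sum.inl (Sum.inl j) => [xcZ lit occ j 0, xcZ lit occ j 1, xcZ lit occ j 2]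
  | Sum.inl (Sum.inr (i, b)) =>
      [Sum.inr (Sum.inl (i, 0)), Sum.inr (Sum.inl (i, 1)),
        Sum.inl (i, b, 0), Sum.inl (i, b, 1)]
  | Sum.inr false => lX.map Sum.inl
  | Sum.inr true => lX'.map Sum.inl ++ lZ.map (fun z => Sum.inr (Sum.inr z))

/-- The capacities of the applicants: `q(a_j) = 1`, `q(g_i^r) = 2`,
`q(h) = 2n − m`, `q(b) = D`. -/
def qAZ (m n D : ℕ) : ApplZ m n → ℕ
  | Sum.inl (Sum.inl _) => 1
  | Sum.inl (Sum.inr _) => 2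
  | Sum.inr false => 2 * n - m
  | Sum.inr true => D

set_option linter.unusedSectionVars false
set_option synthInstance.maxSize 1024
set_option maxHeartbeats 1000000

section Generic
variable {A C : Type*} [DecidableEq A] [DecidableEq C]

lemma mem_bundle {M : Finset (A × C)} {a : A} {c : C} : c ∈ bundle M a ↔ (a, c) ∈ M := by
  simp only [bundle, Finset.mem_image, Finset.mem_filter]
  constructor
  · rintro ⟨⟨a', c'⟩, ⟨hm, rfl⟩, rfl⟩; exact hm
  · intro hm; exact ⟨(a, c), ⟨hm, rfl⟩, rfl⟩

lemma slots_pos_of_mem {M : Finset (A × C)} {a : A} {c : C} (h : (a, c) ∈ M) :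
    1 ≤ slots M c :=
  Finset.card_pos.2 ⟨(a, c), Finset.mem_filter.2 ⟨h, rfl⟩⟩

lemma holder_unique {M : Finset (A × C)} {a a' : A} {c : C} (hs : slots M c ≤ 1)
    (h1 : (a, c) ∈ M) (h2 : (a', c) ∈ M) : a = a' := by
  have hm1 : (a, c) ∈ M.filter fun p => p.2 = c := Finset.mem_filter.2 ⟨h1, rfl⟩
  have hm2 : (a', c) ∈ M.filter fun p => p.2 = c := Finset.mem_filter.2 ⟨h2, rfl⟩
  have := Finset.card_le_one.1 hs _ hm1 _ hm2
  exact congrArg Prod.fst this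

lemma bundle_card_eq {M : Finset (A × C)} {a : A} :
    (bundle M a).card = (M.filter fun p => p.1 = a).card := by
  apply Finset.card_image_of_injOn
  rintro ⟨a1, c1⟩ h1 ⟨a2, c2⟩ h2 (h : c1 = c2)
  simp only [Finset.mem_coe, Finset.mem_filter] at h1 h2
  simp [Prod.ext_iff, h1.2, h2.2, h]

lemma card_eq_sum_bundle [Fintype A] (M : Finset (A × C)) :
    M.card = ∑ a : A, (bundle M a).card := by
  simp only [bundle_card_eq]
  exact Finset.card_eq_sum_card_fiberwise fun p _ => Finset.mem_univ p.1

lemma card_eq_sum_slots [Fintype C] (M : Finset (A × C)) :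
    M.card = ∑ c : C, slots M c :=
  Finset.card_eq_sum_card_fiberwise fun p _ => Finset.mem_univ p.2

end Generic

section Lex
variable {C : Type*} [DecidableEq C]

lemma not_lexPrefers_self {l : List C} {S : Finset C} : ¬ lexPrefers l S S := by
  rintro ⟨c, hc, -⟩; simp at hc

lemma lexPrefers_of_ssubset {l : List C} {S T : Finset C} (h : T ⊂ S) : lexPrefers l S T := by
  have hne : (S \ T).Nonempty := by
    obtain ⟨c, hcS, hcT⟩ := Finset.exists_of_ssubset h
    exact ⟨c, Finset.mem_sdiff.2 ⟨hcS, hcT⟩⟩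
  obtain ⟨c, hc, hmin⟩ := Finset.exists_min_image (S \ T) (fun d => l.idxOf d) hne
  refine ⟨c, hc, fun d hd => ?_⟩
  rcases Finset.mem_union.1 hd with hd | hd
  · exact hmin d hd
  · exact absurd (Finset.mem_sdiff.1 hd).1 (fun hh => (Finset.mem_sdiff.1 hd).2 (h.1 hh))

lemma lexPrefers_nonempty_empty {l : List C} {S : Finset C} (h : S.Nonempty) :
    lexPrefers l S ∅ :=
  lexPrefers_of_ssubset (Finset.ssubset_iff_of_subset (Finset.empty_subset S) |>.2
    ⟨h.choose, h.choose_spec, by simp⟩)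

lemma lexPrefers_of_head {c0 : C} {tl : List C} {S T : Finset C}
    (hc : c0 ∈ S) (hc' : c0 ∉ T) : lexPrefers (c0 :: tl) S T :=
  ⟨c0, Finset.mem_sdiff.2 ⟨hc, hc'⟩, fun d _ => by simp [List.idxOf_cons_self]⟩

lemma not_lexPrefers_of_head {c0 : C} {tl : List C} {S T : Finset C}
    (hc : c0 ∈ T) (hc' : c0 ∉ S) : ¬ lexPrefers (c0 :: tl) S T := by
  rintro ⟨c, hcmem, hmin⟩
  have h0 := hmin c0 (Finset.mem_union_right _ (Finset.mem_sdiff.2 ⟨hc, hc'⟩))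
  rw [List.idxOf_cons_self] at h0
  have hcc0 : c = c0 := by
    by_contra hne
    rw [List.idxOf_cons_ne _ (fun hh => hne hh.symm)] at h0
    simp at h0
  exact hc' (hcc0 ▸ (Finset.mem_sdiff.1 hcmem).1)

lemma lexPrefers_singleton {l : List C} {c c' : C} (hne : c ≠ c')
    (hle : l.idxOf c ≤ l.idxOf c') : lexPrefers l {c} {c'} := by
  refine ⟨c, by simp [hne], fun d hd => ?_⟩
  rcases Finset.mem_union.1 hd with hd | hd
  · simp only [Finset.mem_sdiff, Finset.mem_singleton] at hd; rw [hd.1]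
  · simp only [Finset.mem_sdiff, Finset.mem_singleton] at hd; rw [hd.1]; exact hle

lemma indexOf_lt_of_singleton {l : List C} {c c' : C} (hne : c' ≠ c)
    (hn : ¬ lexPrefers l {c} {c'}) : l.idxOf c' < l.idxOf c := by
  by_contra hle
  exact hn (lexPrefers_singleton (fun h => hne h.symm) (le_of_not_gt hle))

lemma indexOf_append_of_not_mem {l l' : List C} {a : C} (h : a ∉ l) :
    (l ++ l').idxOf a = l.length + l'.idxOf a := by
  induction l with
  | nil => simp
  | cons b t ih =>
    simp only [List.mem_cons, not_or] at h
    rw [List.cons_append, List.idxOf_cons_ne _ (fun hh => h.1 hh.symm), ih h.2,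
      List.length_cons]
    omega

lemma indexOf_append_lt {l l' : List C} {a : C} (h : a ∈ l) :
    (l ++ l').idxOf a < l.length := by
  rw [List.idxOf_append_of_mem h]
  exact List.idxOf_lt_length_iff.2 h

lemma lex_singleton_fin3 {e : Fin 3 → C} (hinj : Function.Injective e) {s k : Fin 3}
    (h : ¬ lexPrefers [e 0, e 1, e 2] {e k} {e s}) (hne : s ≠ k) : s < k := by
  have hidx : ∀ t : Fin 3, ([e 0, e 1, e 2].idxOf (e t)) = (t : ℕ) := by
    intro t
    have h10 : e 1 ≠ e 0 := fun hh => absurd (hinj hh) (by decide)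
    have h20 : e 2 ≠ e 0 := fun hh => absurd (hinj hh) (by decide)
    have h21 : e 2 ≠ e 1 := fun hh => absurd (hinj hh) (by decide)
    fin_cases t <;> simp only [Fin.isValue, Fin.val_zero, Fin.val_one, Fin.val_two]
    · rw [show (⟨0, by omega⟩ : Fin 3) = 0 from rfl, List.idxOf_cons_self]
    · rw [show (⟨1, by omega⟩ : Fin 3) = 1 from rfl,
        List.idxOf_cons_ne _ (fun hh => h10 hh.symm), List.idxOf_cons_self]
    · rw [show (⟨2, by omega⟩ : Fin 3) = 2 from rfl,
        List.idxOf_cons_ne _ (fun hh => h20 hh.symm),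
        List.idxOf_cons_ne _ (fun hh => h21 hh.symm), List.idxOf_cons_self]
  have hlt := indexOf_lt_of_singleton (fun hh => hne (hinj hh)) h
  rw [hidx, hidx] at hlt
  exact hlt

lemma lexPrefers_append_single {l1 l2 : List C} {T : Finset C} {c : C}
    (hc : c ∈ l1) (hcT : c ∉ T) (hT : ∀ d ∈ T, d ∉ l1) :
    lexPrefers (l1 ++ l2) {c} T := by
  refine ⟨c, Finset.mem_sdiff.2 ⟨Finset.mem_singleton_self c, hcT⟩, fun d hd => ?_⟩
  rcases Finset.mem_union.1 hd with hd | hd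
  · rw [Finset.mem_sdiff, Finset.mem_singleton] at hd
    rw [hd.1]
  · rw [Finset.mem_sdiff] at hd
    have h1 : (l1 ++ l2).idxOf c < l1.length := indexOf_append_lt hc
    have h2 : (l1 ++ l2).idxOf d = l1.length + l2.idxOf d :=
      indexOf_append_of_not_mem (hT d hd.1)
    omega

lemma not_lexPrefers_append_single {l1 l2 : List C} {T : Finset C} {c : C}
    (hc : c ∈ l1) (hcT : c ∉ T) (hT : ∀ d ∈ T, d ∉ l1) :
    ¬ lexPrefers (l1 ++ l2) T {c} := by
  rintro ⟨d, hd, hmin⟩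
  rw [Finset.mem_sdiff] at hd
  have hy := hmin c (Finset.mem_union_right _
    (Finset.mem_sdiff.2 ⟨Finset.mem_singleton_self c, hcT⟩))
  have h1 : (l1 ++ l2).idxOf c < l1.length := indexOf_append_lt hc
  have h2 : (l1 ++ l2).idxOf d = l1.length + l2.idxOf d :=
    indexOf_append_of_not_mem (hT d hd.1)
  omega

end Lex

section Improve
variable {A C : Type*} [DecidableEq A] [DecidableEq C]

lemma improve_one {pref : A → List C} {qA : A → ℕ} {coreq : C → C → Prop}
    {M : Finset (A × C)}
    (hPO : ParetoOptimalCR pref qA (fun _ => 1) coreq M) (a0 : A) (T : Finset C)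
    (hfeas : IsFeasibleCR pref qA coreq a0 T)
    (hfree : ∀ c ∈ T, slots M c = 0)
    (hbetter : lexPrefers (pref a0) T (bundle M a0))
    (hnotworse : ¬ lexPrefers (pref a0) (bundle M a0) T) : False := by
  set M' : Finset (A × C) :=
    (M.filter fun p => p.1 ≠ a0) ∪ T.image (fun c => (a0, c)) with hM'def
  have hmem' : ∀ a c, (a, c) ∈ M' ↔ (((a, c) ∈ M ∧ a ≠ a0) ∨ (a = a0 ∧ c ∈ T)) := by
    intro a c
    simp only [hM'def, Finset.mem_union, Finset.mem_filter, Finset.mem_image]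
    constructor
    · rintro (⟨h1, h2⟩ | ⟨c', hc', heq⟩)
      · exact Or.inl ⟨h1, h2⟩
      · obtain ⟨h1, h2⟩ := Prod.ext_iff.1 heq
        simp only at h1 h2
        subst h1
        subst h2
        exact Or.inr ⟨rfl, hc'⟩
    · rintro (⟨h1, h2⟩ | ⟨rfl, hc⟩)
      · exact Or.inl ⟨h1, h2⟩
      · exact Or.inr ⟨c, hc, rfl⟩
  have hbun0 : bundle M' a0 = T := by
    ext c
    rw [mem_bundle, hmem' a0 c]
    simp
  have hbun : ∀ a, a ≠ a0 → bundle M' a = bundle M a := by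
    intro a ha
    ext c
    rw [mem_bundle, hmem' a c, mem_bundle]
    simp [ha]
  have hslots' : ∀ c, slots M' c ≤ 1 := by
    intro c
    have hsub : M'.filter (fun p => p.2 = c)
        ⊆ (M.filter fun p => p.2 = c) ∪ (T.image (fun c => (a0, c))).filter
          (fun p => p.2 = c) := by
      intro q hq
      rw [Finset.mem_filter, hM'def, Finset.mem_union] at hq
      rcases hq.1 with h | h
      · exact Finset.mem_union_left _ (Finset.mem_filter.2 ⟨(Finset.mem_filter.1 h).1, hq.2⟩)
      · exact Finset.mem_union_right _ (Finset.mem_filter.2 ⟨h, hq.2⟩)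
    have hcard2 : ((T.image (fun c => (a0, c))).filter (fun p => p.2 = c)).card ≤ 1 := by
      apply Finset.card_le_one.2
      rintro ⟨a1, c1⟩ h1 ⟨a2, c2⟩ h2
      rw [Finset.mem_filter, Finset.mem_image] at h1 h2
      obtain ⟨⟨d1, -, he1⟩, hc1⟩ := h1
      obtain ⟨⟨d2, -, he2⟩, hc2⟩ := h2
      obtain ⟨rfl, rfl⟩ := Prod.ext_iff.1 he1.symm
      obtain ⟨rfl, rfl⟩ := Prod.ext_iff.1 he2.symm
      simp only at hc1 hc2
      rw [Prod.ext_iff]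
      exact ⟨rfl, hc1.trans hc2.symm⟩
    by_cases hcT : c ∈ T
    · have h1 : (M.filter fun p => p.2 = c).card = 0 := hfree c hcT
      calc slots M' c ≤ ((M.filter fun p => p.2 = c)
            ∪ (T.image (fun c => (a0, c))).filter (fun p => p.2 = c)).card :=
            Finset.card_le_card hsub
        _ ≤ (M.filter fun p => p.2 = c).card
            + ((T.image (fun c => (a0, c))).filter (fun p => p.2 = c)).card :=
            Finset.card_union_le _ _
        _ ≤ 1 := by omega
    · have h2 : ((T.image (fun c => (a0, c))).filter (fun p => p.2 = c)) = ∅ := by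
        rw [Finset.filter_eq_empty_iff]
        rintro ⟨a1, c1⟩ h1
        rw [Finset.mem_image] at h1
        obtain ⟨d, hd, he⟩ := h1
        obtain ⟨rfl, rfl⟩ := Prod.ext_iff.1 he.symm
        simp only
        intro hh
        exact hcT (hh ▸ hd)
      have h3 := hPO.1.2 c
      calc slots M' c ≤ ((M.filter fun p => p.2 = c)
            ∪ (T.image (fun c => (a0, c))).filter (fun p => p.2 = c)).card :=
            Finset.card_le_card hsub
        _ = (M.filter fun p => p.2 = c).card := by rw [h2, Finset.union_empty]
        _ ≤ 1 := h3
  have hM'match : IsMatchingCR pref qA (fun _ => 1) coreq M' := by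
    constructor
    · intro a
      by_cases ha : a = a0
      · subst ha
        rw [hbun0]
        exact hfeas
      · rw [hbun a ha]
        exact hPO.1.1 a
    · exact hslots'
  apply hPO.2 M' hM'match
  constructor
  · exact ⟨a0, by rw [hbun0]; exact hbetter⟩
  · intro a
    by_cases ha : a = a0
    · subst ha
      rw [hbun0]
      exact hnotworse
    · rw [hbun a ha]
      exact not_lexPrefers_self

end Improve

namespace CACR13

variable {m n D : ℕ}

abbrev bApp : ApplZ m n := Sum.inr true
abbrev hApp : ApplZ m n := Sum.inr false
abbrev aApp (j : Fin m) : ApplZ m n := Sum.inl (Sum.inl j)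
abbrev gApp (i : Fin n) (p : Bool) : ApplZ m n := Sum.inl (Sum.inr (i, p))
abbrev yC (i : Fin n) (r : Fin 2) : CourseZ n D := Sum.inr (Sum.inl (i, r))
abbrev zC (z : Fin D) : CourseZ n D := Sum.inr (Sum.inr z)
abbrev xCr (i : Fin n) (p : Bool) (r : Fin 2) : CourseZ n D := Sum.inl (i, p, r)
def yPair (i : Fin n) : Finset (CourseZ n D) := {yC i 0, yC i 1}
def xPair (i : Fin n) (p : Bool) : Finset (CourseZ n D) := {xCr i p 0, xCr i p 1}
def Zall : Finset (CourseZ n D) := univ.image zC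

lemma mem_yPair {i : Fin n} {c : CourseZ n D} : c ∈ yPair i ↔ ∃ r, c = yC i r := by
  constructor
  · intro h; rcases Finset.mem_insert.1 h with h | h
    · exact ⟨0, h⟩
    · exact ⟨1, Finset.mem_singleton.1 h⟩
  · rintro ⟨r, rfl⟩
    fin_cases r
    · exact Finset.mem_insert_self _ _
    · exact Finset.mem_insert_of_mem (Finset.mem_singleton_self _)

lemma mem_xPair {i : Fin n} {p : Bool} {c : CourseZ n D} :
    c ∈ xPair i p ↔ ∃ r, c = xCr i p r := by
  constructor
  · intro h; rcases Finset.mem_insert.1 h with h | h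
    · exact ⟨0, h⟩
    · exact ⟨1, Finset.mem_singleton.1 h⟩
  · rintro ⟨r, rfl⟩
    fin_cases r
    · exact Finset.mem_insert_self _ _
    · exact Finset.mem_insert_of_mem (Finset.mem_singleton_self _)

lemma mem_Zall {c : CourseZ n D} : c ∈ Zall ↔ ∃ z, c = zC z := by
  simp only [Zall, Finset.mem_image, Finset.mem_univ, true_and]
  exact ⟨fun ⟨z, h⟩ => ⟨z, h.symm⟩, fun ⟨z, h⟩ => ⟨z, h.symm⟩⟩

lemma card_yPair (i : Fin n) : (yPair (D := D) i).card = 2 := by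
  rw [yPair, Finset.card_insert_of_notMem (by simp [yC]), Finset.card_singleton]

lemma card_xPair (i : Fin n) (p : Bool) : (xPair (D := D) i p).card = 2 := by
  rw [xPair, Finset.card_insert_of_notMem (by simp [xCr]), Finset.card_singleton]

lemma card_Zall : (Zall : Finset (CourseZ n D)).card = D := by
  rw [Zall, Finset.card_image_of_injective _ (fun a b h => by simpa [zC] using h)]
  simp

-- selection of the first true literal in each clause
def sel (lit : Fin m → Fin 3 → Fin n × Bool) (f : Fin n → Bool) (j : Fin m) : Fin 3 :=
  if h : (Finset.univ.filter fun s => (lit j s).2 = f (lit j s).1).Nonempty then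
    (Finset.univ.filter fun s => (lit j s).2 = f (lit j s).1).min' h else 0

lemma sel_spec {lit : Fin m → Fin 3 → Fin n × Bool} {f : Fin n → Bool} {j : Fin m}
    (hf : ∃ s, (lit j s).2 = f (lit j s).1) :
    (lit j (sel lit f j)).2 = f (lit j (sel lit f j)).1 := by
  have hne : (Finset.univ.filter fun s => (lit j s).2 = f (lit j s).1).Nonempty :=
    ⟨hf.choose, Finset.mem_filter.2 ⟨Finset.mem_univ _, hf.choose_spec⟩⟩
  rw [sel, dif_pos hne]
  exact (Finset.mem_filter.1 (Finset.min'_mem _ hne)).2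

lemma sel_min {lit : Fin m → Fin 3 → Fin n × Bool} {f : Fin n → Bool} {j : Fin m}
    {s : Fin 3} (hs : (lit j s).2 = f (lit j s).1) : sel lit f j ≤ s := by
  have hne : (Finset.univ.filter fun s => (lit j s).2 = f (lit j s).1).Nonempty :=
    ⟨s, Finset.mem_filter.2 ⟨Finset.mem_univ _, hs⟩⟩
  rw [sel, dif_pos hne]
  exact Finset.min'_le _ s (Finset.mem_filter.2 ⟨Finset.mem_univ s, hs⟩)

variable (lit : Fin m → Fin 3 → Fin n × Bool) (occ : Fin m → Fin 3 → Fin 2)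

def tri (j : Fin m) (s : Fin 3) : XCourse n :=
  ((lit j s).1, (lit j s).2, occ j s)

variable (hbij : Function.Bijective
      (fun p : Fin m × Fin 3 =>
        (((lit p.1 p.2).1, (lit p.1 p.2).2, occ p.1 p.2) : Fin n × Bool × Fin 2)))
  (f : Fin n → Bool)

lemma xcZ_eq (j : Fin m) (s : Fin 3) :
    (xcZ lit occ j s : CourseZ n D) = Sum.inl (tri lit occ j s) := rfl

noncomputable def inv (x : XCourse n) : Fin m × Fin 3 := Function.surjInv hbij.2 x

lemma tri_inv (x : XCourse n) :
    tri lit occ (inv lit occ hbij x).1 (inv lit occ hbij x).2 = x :=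
  Function.surjInv_eq hbij.2 x

lemma inv_tri (j : Fin m) (s : Fin 3) : inv lit occ hbij (tri lit occ j s) = (j, s) :=
  hbij.1 (Function.surjInv_eq hbij.2 _)

noncomputable def owner : CourseZ n D → ApplZ m n
  | Sum.inl x =>
      if x.2.1 = f x.1 then
        (if (inv lit occ hbij x).2 = sel lit f (inv lit occ hbij x).1
          then aApp (inv lit occ hbij x).1 else hApp)
      else gApp x.1 x.2.1
  | Sum.inr (Sum.inl y) => gApp y.1 (f y.1)
  | Sum.inr (Sum.inr _) => bApp

lemma tri_snd_fst (j : Fin m) (s : Fin 3) : (tri lit occ j s).2.1 = (lit j s).2 := rfl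
lemma tri_fst (j : Fin m) (s : Fin 3) : (tri lit occ j s).1 = (lit j s).1 := rfl

lemma owner_inl (x : XCourse n) :
    owner lit occ hbij f (Sum.inl x : CourseZ n D) =
      if x.2.1 = f x.1 then
        (if (inv lit occ hbij x).2 = sel lit f (inv lit occ hbij x).1
          then aApp (inv lit occ hbij x).1 else hApp)
      else gApp x.1 x.2.1 := rfl

lemma owner_xc_sel {j : Fin m} (hf : ∃ s, (lit j s).2 = f (lit j s).1) :
    owner lit occ hbij f (xcZ lit occ j (sel lit f j) : CourseZ n D) = aApp j := by
  rw [xcZ_eq, owner_inl, if_pos (by rw [tri_snd_fst, tri_fst]; exact sel_spec hf),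
    inv_tri, if_pos rfl]

lemma owner_y (i : Fin n) (r : Fin 2) :
    owner lit occ hbij f (yC i r : CourseZ n D) = gApp i (f i) := rfl

lemma owner_y' (y : Fin n × Fin 2) :
    owner lit occ hbij f (Sum.inr (Sum.inl y) : CourseZ n D) = gApp y.1 (f y.1) := rfl

lemma owner_z (z : Fin D) : owner lit occ hbij f (zC z : CourseZ n D) = bApp := rfl

lemma owner_x_false {i : Fin n} {p : Bool} (hp : p ≠ f i) (r : Fin 2) :
    owner lit occ hbij f (xCr i p r : CourseZ n D) = gApp i p := by
  rw [xCr, owner_inl, if_neg hp]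


noncomputable def MA : Finset (ApplZ m n × CourseZ n D) :=
  (univ : Finset (CourseZ n D)).image fun c => (owner lit occ hbij f c, c)

lemma mem_MA {q : ApplZ m n × CourseZ n D} :
    q ∈ MA lit occ hbij f ↔ owner lit occ hbij f q.2 = q.1 := by
  simp only [MA, Finset.mem_image, Finset.mem_univ, true_and]
  constructor
  · rintro ⟨c, rfl⟩; rfl
  · intro h; exact ⟨q.2, by rw [h]⟩

lemma bundle_MA (a : ApplZ m n) :
    bundle (MA lit occ hbij f) a = univ.filter fun c : CourseZ n D =>
      owner lit occ hbij f c = a := by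
  ext c
  rw [mem_bundle, mem_MA]
  simp

lemma slots_MA (c : CourseZ n D) : slots (MA lit occ hbij f) c = 1 := by
  have : (MA lit occ hbij f).filter (fun p => p.2 = c) = {(owner lit occ hbij f c, c)} := by
    ext q
    simp only [Finset.mem_filter, Finset.mem_singleton, mem_MA]
    constructor
    · rintro ⟨h1, rfl⟩; rw [Prod.ext_iff]; exact ⟨h1.symm, rfl⟩
    · rintro rfl; exact ⟨rfl, rfl⟩
  rw [slots, this, Finset.card_singleton]

lemma card_MA : (MA lit occ hbij f : Finset (ApplZ m n × CourseZ n D)).card = (n * 2 * 2) + (n * 2 + D) := by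
  rw [MA, Finset.card_image_of_injective _ (fun c c' h => (Prod.ext_iff.1 h).2),
    Finset.card_univ]
  simp
  ring

lemma bundle_MA_a {j : Fin m} (hf : ∃ s, (lit j s).2 = f (lit j s).1) :
    bundle (MA lit occ hbij f) (aApp j) = {(xcZ lit occ j (sel lit f j) : CourseZ n D)} := by
  rw [bundle_MA]
  ext c
  simp only [Finset.mem_filter, Finset.mem_univ, true_and, Finset.mem_singleton]
  constructor
  · intro h
    rcases c with x | y | z
    · rw [owner_inl] at h
      split_ifs at h with h1 h2
      · simp only [aApp, Sum.inl.injEq] at h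
        have hx : x = tri lit occ j (sel lit f j) := by
          have hti := tri_inv lit occ hbij x
          rw [h2, h] at hti
          exact hti.symm
        rw [hx]; rfl
      · simp at h
    · rw [owner_y'] at h
      simp at h
    · rw [owner_z] at h
      simp at h
  · rintro rfl
    exact owner_xc_sel lit occ hbij f hf

lemma bundle_MA_gy (i : Fin n) :
    bundle (MA lit occ hbij f) (gApp i (f i)) = (yPair i : Finset (CourseZ n D)) := by
  rw [bundle_MA]
  ext c
  simp only [Finset.mem_filter, Finset.mem_univ, true_and]
  constructor
  · intro h
    rcases c with x | y | z
    · rw [owner_inl] at h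
      split_ifs at h with h1 h2
      · simp at h
      · simp only [gApp, Sum.inl.injEq, Sum.inr.injEq, Prod.mk.injEq] at h
        rw [h.1] at h1
        exact absurd h.2 h1
    · rw [owner_y'] at h
      simp only [gApp, Sum.inl.injEq, Sum.inr.injEq, Prod.mk.injEq] at h
      rw [mem_yPair]
      exact ⟨y.2, by rw [← h.1]⟩
    · rw [owner_z] at h
      simp at h
  · intro hc
    obtain ⟨r, rfl⟩ := mem_yPair.1 hc
    exact owner_y lit occ hbij f i r

lemma bundle_MA_gx {i : Fin n} {p : Bool} (hp : p ≠ f i) :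
    bundle (MA lit occ hbij f) (gApp i p) = (xPair i p : Finset (CourseZ n D)) := by
  rw [bundle_MA]
  ext c
  simp only [Finset.mem_filter, Finset.mem_univ, true_and]
  constructor
  · intro h
    rcases c with x | y | z
    · rw [owner_inl] at h
      split_ifs at h with h1 h2
      · simp at h
      · simp only [gApp, Sum.inl.injEq, Sum.inr.injEq, Prod.mk.injEq] at h
        rw [mem_xPair]
        refine ⟨x.2.2, ?_⟩
        rw [← h.1, ← h.2]
    · rw [owner_y'] at h
      simp only [gApp, Sum.inl.injEq, Sum.inr.injEq, Prod.mk.injEq] at h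
      exact (hp (by rw [← h.2, h.1])).elim
    · rw [owner_z] at h
      simp at h
  · intro hc
    obtain ⟨r, rfl⟩ := mem_xPair.1 hc
    exact owner_x_false lit occ hbij f hp r

noncomputable def Hset : Finset (XCourse n) :=
  univ.filter fun x : XCourse n => x.2.1 = f x.1 ∧
    ¬ (inv lit occ hbij x).2 = sel lit f (inv lit occ hbij x).1

lemma bundle_MA_h :
    bundle (MA lit occ hbij f) hApp
      = ((Hset lit occ hbij f).image Sum.inl : Finset (CourseZ n D)) := by
  rw [bundle_MA]
  ext c
  simp only [Finset.mem_filter, Finset.mem_univ, true_and, Finset.mem_image, Hset]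
  constructor
  · intro h
    rcases c with x | y | z
    · rw [owner_inl] at h
      split_ifs at h with h1 h2
      · exact ⟨x, ⟨h1, h2⟩, rfl⟩
    · rw [owner_y'] at h
      simp at h
    · rw [owner_z] at h
      simp at h
  · rintro ⟨x, ⟨h1, h2⟩, rfl⟩
    rw [owner_inl, if_pos h1, if_neg h2]

lemma bundle_MA_b :
    bundle (MA lit occ hbij f) bApp = (Zall : Finset (CourseZ n D)) := by
  rw [bundle_MA]
  ext c
  simp only [Finset.mem_filter, Finset.mem_univ, true_and]
  constructor
  · intro h
    rcases c with x | y | z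
    · rw [owner_inl] at h
      split_ifs at h with h1 h2
      · simp at h
    · rw [owner_y'] at h
      simp at h
    · exact mem_Zall.2 ⟨z, rfl⟩
  · intro hc
    obtain ⟨z, rfl⟩ := mem_Zall.1 hc
    rfl

lemma card_Hset (hf : ∀ j, ∃ s, (lit j s).2 = f (lit j s).1) :
    (Hset lit occ hbij f : Finset (XCourse n)).card = 2 * n - m := by
  classical
  set T : Finset (XCourse n) := univ.filter fun x => x.2.1 = f x.1 with hT
  set Ssel : Finset (XCourse n) := univ.image fun j => tri lit occ j (sel lit f j) with hS
  have hmemS : ∀ x : XCourse n, x ∈ Ssel ↔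
      (inv lit occ hbij x).2 = sel lit f (inv lit occ hbij x).1 := by
    intro x
    simp only [hS, Finset.mem_image, Finset.mem_univ, true_and]
    constructor
    · rintro ⟨j, rfl⟩
      rw [inv_tri]
    · intro h
      refine ⟨(inv lit occ hbij x).1, ?_⟩
      conv_rhs => rw [← tri_inv lit occ hbij x]
      rw [h]
  have hsub : Ssel ⊆ T := by
    intro x hx
    simp only [hS, Finset.mem_image, Finset.mem_univ, true_and] at hx
    obtain ⟨j, rfl⟩ := hx
    simp only [hT, Finset.mem_filter, Finset.mem_univ, true_and]
    rw [tri_snd_fst, tri_fst]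
    exact sel_spec (hf j)
  have hHset : Hset lit occ hbij f = T \ Ssel := by
    ext x
    simp only [Hset, Finset.mem_filter, Finset.mem_univ, true_and, Finset.mem_sdiff, hT,
      hmemS x]
  have hcardT : T.card = 2 * n := by
    have : T = univ.image fun ir : Fin n × Fin 2 => ((ir.1, f ir.1, ir.2) : XCourse n) := by
      ext x
      simp only [hT, Finset.mem_filter, Finset.mem_univ, true_and, Finset.mem_image]
      constructor
      · intro h
        exact ⟨(x.1, x.2.2), by rw [← h]⟩
      · rintro ⟨ir, rfl⟩; rfl
    rw [this, Finset.card_image_of_injective _ ?_, Finset.card_univ]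
    · simp [mul_comm]
    · rintro ⟨i1, r1⟩ ⟨i2, r2⟩ h
      simp only [Prod.ext_iff] at h ⊢
      exact ⟨h.1, h.2.2⟩
  have hcardS : Ssel.card = m := by
    rw [hS, Finset.card_image_of_injective _ ?_, Finset.card_univ, Fintype.card_fin]
    intro j j' h
    have : (j, sel lit f j) = (j', sel lit f j') := hbij.1 h
    exact (Prod.ext_iff.1 this).1
  rw [hHset, Finset.card_sdiff_of_subset hsub, hcardT, hcardS]

lemma card_bundle_MA_h (hf : ∀ j, ∃ s, (lit j s).2 = f (lit j s).1) :
    (bundle (MA lit occ hbij f) hApp : Finset (CourseZ n D)).card = 2 * n - m := by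
  rw [bundle_MA_h, Finset.card_image_of_injective _ Sum.inl_injective, card_Hset lit occ hbij f hf]

-- coreq helpers
lemma coreqZ_y (i : Fin n) (r r' : Fin 2) : coreqZ (yC i r : CourseZ n D) (yC i r') := rfl

lemma coreqZ_z (z z' : Fin D) : coreqZ (zC z : CourseZ n D) (zC z') := rfl

lemma coreq_inl_eq {x : XCourse n} {c' : CourseZ n D} (h : coreqZ (Sum.inl x) c') :
    c' = Sum.inl x := by
  rcases c' with x' | y' | z' <;> simp [coreqZ, classOf] at h ⊢
  exact h.symm

lemma coreq_y_mem {i : Fin n} {r : Fin 2} {c' : CourseZ n D}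
    (h : coreqZ (yC i r) c') : ∃ r', c' = yC i r' := by
  rcases c' with x' | y' | z' <;> simp [coreqZ, classOf] at h
  exact ⟨y'.2, by rw [h]⟩

lemma coreq_z_mem {z : Fin D} {c' : CourseZ n D}
    (h : coreqZ (zC z) c') : ∃ z', c' = zC z' := by
  rcases c' with x' | y' | z' <;> simp [coreqZ, classOf] at h
  exact ⟨z', rfl⟩

variable (lX lX' : List (XCourse n)) (lZ : List (Fin D))

lemma pref_a (j : Fin m) : prefZ lit occ lX lX' lZ (aApp j)
    = [xcZ lit occ j 0, xcZ lit occ j 1, xcZ lit occ j 2] := rfl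

lemma pref_g (i : Fin n) (p : Bool) : prefZ lit occ lX lX' lZ (gApp i p)
    = [yC i 0, yC i 1, xCr i p 0, xCr i p 1] := rfl

lemma pref_h : prefZ lit occ lX lX' lZ hApp = lX.map Sum.inl := rfl

lemma pref_b : prefZ lit occ lX lX' lZ bApp
    = lX'.map Sum.inl ++ lZ.map (fun z => Sum.inr (Sum.inr z)) := rfl

lemma fin3_cases (s : Fin 3) : s = 0 ∨ s = 1 ∨ s = 2 := by
  fin_cases s
  · exact Or.inl rfl
  · exact Or.inr (Or.inl rfl)
  · exact Or.inr (Or.inr rfl)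

include hbij in
lemma xcZ_inj {j : Fin m} {s s' : Fin 3}
    (h : (xcZ lit occ j s : CourseZ n D) = xcZ lit occ j s') : s = s' := by
  have h2 : tri lit occ j s = tri lit occ j s' := Sum.inl_injective h
  have h3 : ((j, s) : Fin m × Fin 3) = (j, s') := hbij.1 h2
  exact (Prod.ext_iff.1 h3).2

lemma MA_matching (hf : ∀ j, ∃ s, (lit j s).2 = f (lit j s).1)
    (hlXall : ∀ x, x ∈ lX) (hlX'all : ∀ x, x ∈ lX') (hlZall : ∀ z, z ∈ lZ) :
    IsMatchingCR (prefZ lit occ lX lX' lZ) (qAZ m n D) (fun _ => 1) coreqZ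
      (MA lit occ hbij f) := by
  constructor
  · rintro ((j | ⟨i, p⟩) | b')
    · -- applicant a_j
      rw [IsFeasibleCR, bundle_MA_a lit occ hbij f (hf j)]
      refine ⟨?_, by simp [qAZ, aApp], ?_⟩
      · intro c hc
        rw [Finset.mem_singleton] at hc
        subst hc
        rw [pref_a]
        rcases fin3_cases (sel lit f j) with hs | hs | hs <;> rw [hs] <;> simp
      · intro c hc c' hcc
        rw [Finset.mem_singleton] at hc
        subst hc
        rw [Finset.mem_singleton, coreq_inl_eq hcc]
        rfl
    · -- applicant g_i^p
      by_cases hp : p = f i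
      · subst hp
        rw [IsFeasibleCR, bundle_MA_gy]
        refine ⟨?_, by rw [card_yPair]; simp [qAZ, gApp], ?_⟩
        · intro c hc
          obtain ⟨r, rfl⟩ := mem_yPair.1 hc
          rw [pref_g]
          fin_cases r <;> simp
        · intro c hc c' hcc
          obtain ⟨r, rfl⟩ := mem_yPair.1 hc
          obtain ⟨r', rfl⟩ := coreq_y_mem hcc
          exact mem_yPair.2 ⟨r', rfl⟩
      · rw [IsFeasibleCR, bundle_MA_gx lit occ hbij f hp]
        refine ⟨?_, by rw [card_xPair]; simp [qAZ, gApp], ?_⟩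
        · intro c hc
          obtain ⟨r, rfl⟩ := mem_xPair.1 hc
          rw [pref_g]
          fin_cases r <;> simp [xCr]
        · intro c hc c' hcc
          obtain ⟨r, rfl⟩ := mem_xPair.1 hc
          rw [coreq_inl_eq hcc]
          exact mem_xPair.2 ⟨r, rfl⟩
    · cases b'
      · -- applicant h
        rw [IsFeasibleCR]
        refine ⟨?_, ?_, ?_⟩
        · intro c hc
          rw [bundle_MA_h] at hc
          obtain ⟨x, -, rfl⟩ := Finset.mem_image.1 hc
          rw [pref_h]
          exact List.mem_map.2 ⟨x, hlXall x, rfl⟩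
        · rw [show (bundle (MA lit occ hbij f) (Sum.inr false) : Finset (CourseZ n D))
            = bundle (MA lit occ hbij f) hApp from rfl, card_bundle_MA_h lit occ hbij f hf]
          simp [qAZ]
        · intro c hc c' hcc
          rw [bundle_MA_h] at hc ⊢
          obtain ⟨x, hx, rfl⟩ := Finset.mem_image.1 hc
          rw [coreq_inl_eq hcc]
          exact Finset.mem_image.2 ⟨x, hx, rfl⟩
      · -- applicant b
        rw [IsFeasibleCR]
        refine ⟨?_, ?_, ?_⟩
        · intro c hc
          rw [bundle_MA_b] at hc
          obtain ⟨z, rfl⟩ := mem_Zall.1 hc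
          rw [pref_b]
          exact List.mem_append_right _ (List.mem_map.2 ⟨z, hlZall z, rfl⟩)
        · rw [show (bundle (MA lit occ hbij f) (Sum.inr true) : Finset (CourseZ n D))
            = bundle (MA lit occ hbij f) bApp from rfl, bundle_MA_b, card_Zall]
          simp [qAZ]
        · intro c hc c' hcc
          rw [bundle_MA_b] at hc ⊢
          obtain ⟨z, rfl⟩ := mem_Zall.1 hc
          obtain ⟨z', rfl⟩ := coreq_z_mem hcc
          exact mem_Zall.2 ⟨z', rfl⟩
  · intro c
    rw [slots_MA]

lemma MA_pareto (hf : ∀ j, ∃ s, (lit j s).2 = f (lit j s).1) (hD : 1 ≤ D)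
    (hlXall : ∀ x, x ∈ lX) (hlX'all : ∀ x, x ∈ lX') (hlZall : ∀ z, z ∈ lZ) :
    ∀ M', IsMatchingCR (prefZ lit occ lX lX' lZ) (qAZ m n D) (fun _ => 1) coreqZ M' →
      ¬ DominatesCR (prefZ lit occ lX lX' lZ) M' (MA lit occ hbij f) := by
  intro M' hM' hdom
  obtain ⟨⟨a0, ha0⟩, hnw⟩ := hdom
  have uniq : ∀ {a a' : ApplZ m n} {c : CourseZ n D},
      (a, c) ∈ M' → (a', c) ∈ M' → a = a' := by
    intro a a' c h1 h2
    exact holder_unique (hM'.2 c) h1 h2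
  -- Step 1: the g applicants holding the y-courses keep them
  have P1 : ∀ i, bundle M' (gApp i (f i)) = (yPair i : Finset (CourseZ n D)) := by
    intro i
    by_cases hy : (yC i 0 : CourseZ n D) ∈ bundle M' (gApp i (f i))
    · have hy1 : (yC i 1 : CourseZ n D) ∈ bundle M' (gApp i (f i)) :=
        (hM'.1 _).2.2 _ hy _ (coreqZ_y i 0 1)
      have hsub : (yPair i : Finset (CourseZ n D)) ⊆ bundle M' (gApp i (f i)) := by
        intro c hc
        rcases mem_yPair.1 hc with ⟨r, rfl⟩
        fin_cases r
        · exact hy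
        · exact hy1
      have hcard : (bundle M' (gApp i (f i))).card ≤ (yPair i : Finset (CourseZ n D)).card := by
        rw [card_yPair]
        exact le_trans (hM'.1 (gApp i (f i))).2.1 (by simp [qAZ, gApp])
      exact (Finset.eq_of_subset_of_card_le hsub hcard).symm
    · exfalso
      apply hnw (gApp i (f i))
      rw [bundle_MA_gy, pref_g]
      exact lexPrefers_of_head (mem_yPair.2 ⟨0, rfl⟩) hy
  -- Step 2: the other g applicants keep their x-courses
  have P2 : ∀ i p, p ≠ f i → bundle M' (gApp i p) = (xPair i p : Finset (CourseZ n D)) := by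
    intro i p hp
    have hy0 : (yC i 0 : CourseZ n D) ∉ bundle M' (gApp i p) := by
      intro hy
      have hy' : (yC i 0 : CourseZ n D) ∈ bundle M' (gApp i (f i)) := by
        rw [P1 i]; exact mem_yPair.2 ⟨0, rfl⟩
      have := uniq (mem_bundle.1 hy) (mem_bundle.1 hy')
      simp only [gApp, Sum.inl.injEq, Sum.inr.injEq, Prod.mk.injEq] at this
      exact hp this.2
    have hy1 : (yC i 1 : CourseZ n D) ∉ bundle M' (gApp i p) := by
      intro hy
      exact hy0 ((hM'.1 _).2.2 _ hy _ (coreqZ_y i 1 0))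
    have hsub : bundle M' (gApp i p) ⊆ (xPair i p : Finset (CourseZ n D)) := by
      intro c hc
      have hcp := (hM'.1 (gApp i p)).1 c hc
      rw [pref_g] at hcp
      simp only [List.mem_cons, List.not_mem_nil, or_false] at hcp
      rcases hcp with rfl | rfl | rfl | rfl
      · exact absurd hc hy0
      · exact absurd hc hy1
      · exact mem_xPair.2 ⟨0, rfl⟩
      · exact mem_xPair.2 ⟨1, rfl⟩
    by_cases heq : bundle M' (gApp i p) = (xPair i p : Finset (CourseZ n D))
    · exact heq
    · exfalso
      apply hnw (gApp i p)
      rw [bundle_MA_gx lit occ hbij f hp]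
      exact lexPrefers_of_ssubset (ssubset_of_subset_of_ne hsub heq)
  -- Step 3: the a_j applicants keep their courses
  have P3 : ∀ j, bundle M' (aApp j)
      = ({(xcZ lit occ j (sel lit f j) : CourseZ n D)} : Finset (CourseZ n D)) := by
    intro j
    have hne : (bundle M' (aApp j)).Nonempty := by
      by_contra hne
      rw [Finset.not_nonempty_iff_eq_empty] at hne
      apply hnw (aApp j)
      rw [bundle_MA_a lit occ hbij f (hf j), hne]
      exact lexPrefers_nonempty_empty ⟨_, Finset.mem_singleton_self _⟩
    obtain ⟨c', hc'⟩ := hne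
    have hS : bundle M' (aApp j) = {c'} := by
      apply Finset.eq_singleton_iff_unique_mem.2
      refine ⟨hc', fun d hd => ?_⟩
      have hcard := le_trans (hM'.1 (aApp j)).2.1 (by simp [qAZ, aApp] : qAZ m n D (aApp j) ≤ 1)
      exact Finset.card_le_one.1 hcard d hd c' hc'
    have hcp := (hM'.1 (aApp j)).1 c' hc'
    rw [pref_a] at hcp
    simp only [List.mem_cons, List.not_mem_nil, or_false] at hcp
    obtain ⟨s, rfl⟩ : ∃ s, c' = (xcZ lit occ j s : CourseZ n D) := by
      rcases hcp with rfl | rfl | rfl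
      · exact ⟨0, rfl⟩
      · exact ⟨1, rfl⟩
      · exact ⟨2, rfl⟩
    by_cases hss : s = sel lit f j
    · rw [hS, hss]
    · exfalso
      have hinj : Function.Injective (fun t : Fin 3 => (xcZ lit occ j t : CourseZ n D)) := by
        intro t t' h
        exact xcZ_inj lit occ hbij h
      have hnlex : ¬ lexPrefers
          [(xcZ lit occ j 0 : CourseZ n D), xcZ lit occ j 1, xcZ lit occ j 2]
          {(xcZ lit occ j (sel lit f j) : CourseZ n D)} {(xcZ lit occ j s : CourseZ n D)} := by
        intro hlex
        apply hnw (aApp j)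
        rw [bundle_MA_a lit occ hbij f (hf j), hS, pref_a]
        exact hlex
      have hslt : s < sel lit f j := lex_singleton_fin3 hinj hnlex hss
      have hfalse : (lit j s).2 ≠ f (lit j s).1 := by
        intro hgood
        exact absurd (sel_min hgood) (not_le.2 hslt)
      have hmem' : (xcZ lit occ j s : CourseZ n D)
          ∈ bundle M' (gApp (lit j s).1 (lit j s).2) := by
        rw [P2 _ _ hfalse]
        exact mem_xPair.2 ⟨occ j s, rfl⟩
      have := uniq (mem_bundle.1 hc') (mem_bundle.1 hmem')
      simp [aApp, gApp] at this
  -- Step 4: h keeps its bundle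
  have P4 : bundle M' hApp = bundle (MA lit occ hbij f) hApp := by
    have hsub : bundle M' hApp ⊆ bundle (MA lit occ hbij f) hApp := by
      intro c hc
      have hcp := (hM'.1 hApp).1 c hc
      rw [pref_h] at hcp
      obtain ⟨x, -, rfl⟩ := List.mem_map.1 hcp
      by_cases h1 : x.2.1 = f x.1
      · by_cases h2 : (inv lit occ hbij x).2 = sel lit f (inv lit occ hbij x).1
        · exfalso
          have hxc : (Sum.inl x : CourseZ n D)
              = xcZ lit occ (inv lit occ hbij x).1 (sel lit f (inv lit occ hbij x).1) := by
            conv_lhs => rw [← tri_inv lit occ hbij x]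
            rw [h2]
            rfl
          have hmem' : (Sum.inl x : CourseZ n D)
              ∈ bundle M' (aApp (inv lit occ hbij x).1) := by
            rw [P3, hxc]
            exact Finset.mem_singleton_self _
          have := uniq (mem_bundle.1 hc) (mem_bundle.1 hmem')
          simp [hApp, aApp] at this
        · rw [bundle_MA_h]
          exact Finset.mem_image.2 ⟨x, Finset.mem_filter.2 ⟨Finset.mem_univ _, h1, h2⟩, rfl⟩
      · exfalso
        have hmem' : (Sum.inl x : CourseZ n D) ∈ bundle M' (gApp x.1 x.2.1) := by
          rw [P2 _ _ h1]
          exact mem_xPair.2 ⟨x.2.2, rfl⟩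
        have := uniq (mem_bundle.1 hc) (mem_bundle.1 hmem')
        simp [hApp, gApp] at this
    by_cases heq : bundle M' hApp = bundle (MA lit occ hbij f) hApp
    · exact heq
    · exfalso
      exact hnw hApp (lexPrefers_of_ssubset (ssubset_of_subset_of_ne hsub heq))
  -- every X-course is taken in M' by an applicant other than b
  have PX : ∀ (x : XCourse n) (a : ApplZ m n),
      (Sum.inl x : CourseZ n D) ∈ bundle M' a → a ≠ bApp := by
    intro x a hxa hab
    subst hab
    by_cases h1 : x.2.1 = f x.1
    · by_cases h2 : (inv lit occ hbij x).2 = sel lit f (inv lit occ hbij x).1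
      · have hxc : (Sum.inl x : CourseZ n D)
            = xcZ lit occ (inv lit occ hbij x).1 (sel lit f (inv lit occ hbij x).1) := by
          conv_lhs => rw [← tri_inv lit occ hbij x]
          rw [h2]
          rfl
        have hmem' : (Sum.inl x : CourseZ n D)
            ∈ bundle M' (aApp (inv lit occ hbij x).1) := by
          rw [P3, hxc]
          exact Finset.mem_singleton_self _
        have := uniq (mem_bundle.1 hxa) (mem_bundle.1 hmem')
        simp [bApp, aApp] at this
      · have hmem' : (Sum.inl x : CourseZ n D) ∈ bundle M' hApp := by
          rw [P4, bundle_MA_h]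
          exact Finset.mem_image.2 ⟨x, Finset.mem_filter.2 ⟨Finset.mem_univ _, h1, h2⟩, rfl⟩
        have := uniq (mem_bundle.1 hxa) (mem_bundle.1 hmem')
        simp [bApp, hApp] at this
    · have hmem' : (Sum.inl x : CourseZ n D) ∈ bundle M' (gApp x.1 x.2.1) := by
        rw [P2 _ _ h1]
        exact mem_xPair.2 ⟨x.2.2, rfl⟩
      have := uniq (mem_bundle.1 hxa) (mem_bundle.1 hmem')
      simp [bApp, gApp] at this
  -- Step 5: b keeps all of Z
  have P5 : bundle M' bApp = (Zall : Finset (CourseZ n D)) := by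
    have hsub : bundle M' bApp ⊆ (Zall : Finset (CourseZ n D)) := by
      intro c hc
      have hcp := (hM'.1 bApp).1 c hc
      rw [pref_b] at hcp
      rcases List.mem_append.1 hcp with hcp | hcp
      · obtain ⟨x, -, rfl⟩ := List.mem_map.1 hcp
        exact absurd rfl (PX x bApp hc)
      · obtain ⟨z, -, rfl⟩ := List.mem_map.1 hcp
        exact mem_Zall.2 ⟨z, rfl⟩
    rcases Finset.eq_empty_or_nonempty (bundle M' bApp) with hS | ⟨c0, hc0⟩
    · exfalso
      apply hnw bApp
      rw [bundle_MA_b, hS]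
      exact lexPrefers_nonempty_empty ⟨zC ⟨0, hD⟩, mem_Zall.2 ⟨⟨0, hD⟩, rfl⟩⟩
    · obtain ⟨z0, rfl⟩ := mem_Zall.1 (hsub hc0)
      have hsup : (Zall : Finset (CourseZ n D)) ⊆ bundle M' bApp := by
        intro c hcz
        obtain ⟨z', rfl⟩ := mem_Zall.1 hcz
        exact (hM'.1 bApp).2.2 _ hc0 _ (coreqZ_z z0 z')
      exact Finset.Subset.antisymm hsub hsup
  -- conclusion: all bundles agree, contradicting strict improvement
  have hall : ∀ a, bundle M' a = bundle (MA lit occ hbij f) a := by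
    rintro ((j | ⟨i, p⟩) | b')
    · rw [P3, bundle_MA_a lit occ hbij f (hf j)]
    · by_cases hp : p = f i
      · subst hp
        rw [P1, bundle_MA_gy]
      · rw [P2 _ _ hp, bundle_MA_gx lit occ hbij f hp]
    · cases b'
      · exact P4
      · rw [show (Sum.inr true : ApplZ m n) = bApp from rfl, P5, bundle_MA_b]
  rw [hall a0] at ha0
  exact not_lexPrefers_self ha0

lemma X_full_of_bZ (hD : 1 ≤ D)
    (hlX'all : ∀ x, x ∈ lX')
    {M : Finset (ApplZ m n × CourseZ n D)}
    (hPO : ParetoOptimalCR (prefZ lit occ lX lX' lZ) (qAZ m n D) (fun _ => 1) coreqZ M)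
    (hbB : bundle M bApp = (Zall : Finset (CourseZ n D))) :
    ∀ x : XCourse n, 1 ≤ slots M (Sum.inl x : CourseZ n D) := by
  intro x
  by_contra hx
  have hx0 : slots M (Sum.inl x : CourseZ n D) = 0 := by omega
  have hxZ : (Sum.inl x : CourseZ n D) ∉ (Zall : Finset (CourseZ n D)) := by
    intro hmem
    obtain ⟨z, hz⟩ := mem_Zall.1 hmem
    simp [zC] at hz
  have hmemX : (Sum.inl x : CourseZ n D) ∈ lX'.map Sum.inl :=
    List.mem_map.2 ⟨x, hlX'all x, rfl⟩
  have hTnot : ∀ d ∈ (Zall : Finset (CourseZ n D)), d ∉ lX'.map Sum.inl := by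
    intro d hd hmem
    obtain ⟨z', rfl⟩ := mem_Zall.1 hd
    obtain ⟨x', -, hx'⟩ := List.mem_map.1 hmem
    simp [zC] at hx'
  apply improve_one hPO bApp {(Sum.inl x : CourseZ n D)}
  · refine ⟨?_, ?_, ?_⟩
    · intro c hc
      rw [Finset.mem_singleton] at hc
      subst hc
      rw [pref_b]
      exact List.mem_append_left _ hmemX
    · rw [Finset.card_singleton]
      exact hD
    · intro c hc c' hcc
      rw [Finset.mem_singleton] at hc
      subst hc
      rw [Finset.mem_singleton, coreq_inl_eq hcc]
  · intro c hc
    rw [Finset.mem_singleton] at hc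
    subst hc
    exact hx0
  · rw [hbB, pref_b]
    exact lexPrefers_append_single hmemX hxZ hTnot
  · rw [hbB, pref_b]
    exact not_lexPrefers_append_single hmemX hxZ hTnot

lemma Y_full
    {M : Finset (ApplZ m n × CourseZ n D)}
    (hPO : ParetoOptimalCR (prefZ lit occ lX lX' lZ) (qAZ m n D) (fun _ => 1) coreqZ M) :
    ∀ (i : Fin n) (r : Fin 2), 1 ≤ slots M (yC i r : CourseZ n D) := by
  have hfeas := hPO.1.1
  intro i r
  by_contra hy
  have hy0 : slots M (yC i r : CourseZ n D) = 0 := by omega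
  have hy0' : ∀ r', slots M (yC i r' : CourseZ n D) = 0 := by
    intro r'
    by_cases hrr : r' = r
    · rw [hrr]; exact hy0
    · by_contra hpos
      have hp1 : 0 < slots M (yC i r' : CourseZ n D) := Nat.pos_of_ne_zero hpos
      obtain ⟨⟨a', c'⟩, hp'⟩ := Finset.card_pos.1 hp1
      rw [Finset.mem_filter] at hp'
      obtain ⟨hp'M, hc'⟩ := hp'
      simp only at hc'
      subst hc'
      have hin : (yC i r : CourseZ n D) ∈ bundle M a' :=
        (hfeas a').2.2 _ (mem_bundle.2 hp'M) _ (coreqZ_y i r' r)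
      have := slots_pos_of_mem (mem_bundle.1 hin)
      omega
  have hnotin : (yC i 0 : CourseZ n D) ∉ bundle M (gApp i true) := by
    intro hmem
    have := slots_pos_of_mem (mem_bundle.1 hmem)
    have := hy0' 0
    omega
  apply improve_one hPO (gApp i true) (yPair i)
  · refine ⟨?_, ?_, ?_⟩
    · intro c hc
      obtain ⟨r', rfl⟩ := mem_yPair.1 hc
      rw [pref_g]
      fin_cases r' <;> simp
    · rw [card_yPair]
      exact le_refl _
    · intro c hc c' hcc
      obtain ⟨r', rfl⟩ := mem_yPair.1 hc
      obtain ⟨r'', rfl⟩ := coreq_y_mem hcc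
      exact mem_yPair.2 ⟨r'', rfl⟩
  · intro c hc
    obtain ⟨r', rfl⟩ := mem_yPair.1 hc
    exact hy0' r'
  · rw [pref_g]
    exact lexPrefers_of_head (mem_yPair.2 ⟨0, rfl⟩) hnotin
  · rw [pref_g]
    exact not_lexPrefers_of_head (mem_yPair.2 ⟨0, rfl⟩) hnotin

lemma partB (hm : m * 3 = n * 4) (hD : 1 ≤ D)
    (hlX'all : ∀ x, x ∈ lX')
    (hunsat : ¬ ∃ f : Fin n → Bool, ∀ j : Fin m, ∃ s : Fin 3, (lit j s).2 = f (lit j s).1)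
    (M : Finset (ApplZ m n × CourseZ n D))
    (hPO : ParetoOptimalCR (prefZ lit occ lX lX' lZ) (qAZ m n D) (fun _ => 1) coreqZ M) :
    M.card ≤ 6 * n := by
  by_contra hbig
  push_neg at hbig
  have hM := hPO.1
  have hfeas := hM.1
  have hs1 : ∀ c, slots M c ≤ 1 := hM.2
  have uniq : ∀ {a a' : ApplZ m n} {c : CourseZ n D}, (a, c) ∈ M → (a', c) ∈ M → a = a' :=
    fun h1 h2 => holder_unique (hs1 _) h1 h2
  have hcX : Fintype.card (XCourse n) = 4 * n := by simp; ring
  have hcY : Fintype.card (Fin n × Fin 2) = 2 * n := by simp; ring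
  -- some Z-course must be used
  have hzpos : ∃ z : Fin D, 1 ≤ slots M (zC z : CourseZ n D) := by
    by_contra hz
    push_neg at hz
    have hzero : ∀ z, slots M (zC z : CourseZ n D) = 0 := fun z => by have := hz z; omega
    have hXb : ∑ x : XCourse n, slots M (Sum.inl x : CourseZ n D) ≤ 4 * n := by
      calc ∑ x : XCourse n, slots M (Sum.inl x : CourseZ n D)
          ≤ ∑ _x : XCourse n, 1 := Finset.sum_le_sum (fun x _ => hs1 _)
        _ = 4 * n := by rw [Finset.sum_const, Finset.card_univ, smul_eq_mul, mul_one, hcX]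
    have hYb : ∑ y : Fin n × Fin 2, slots M (Sum.inr (Sum.inl y) : CourseZ n D) ≤ 2 * n := by
      calc ∑ y : Fin n × Fin 2, slots M (Sum.inr (Sum.inl y) : CourseZ n D)
          ≤ ∑ _y : Fin n × Fin 2, 1 := Finset.sum_le_sum (fun y _ => hs1 _)
        _ = 2 * n := by rw [Finset.sum_const, Finset.card_univ, smul_eq_mul, mul_one, hcY]
    have hZb : ∑ z : Fin D, slots M (Sum.inr (Sum.inr z) : CourseZ n D) = 0 :=
      Finset.sum_eq_zero (fun z _ => hzero z)
    have hsum := card_eq_sum_slots M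
    rw [Fintype.sum_sum_type, Fintype.sum_sum_type] at hsum
    omega
  obtain ⟨z0, hz0⟩ := hzpos
  obtain ⟨⟨a, c⟩, hp⟩ := Finset.card_pos.1 hz0
  rw [Finset.mem_filter] at hp
  obtain ⟨hpM, hc⟩ := hp
  simp only at hc
  subst hc
  have hab : a = bApp := by
    have hmem := (hfeas a).1 _ (mem_bundle.2 hpM)
    rcases a with (j | ⟨i, p⟩) | b'
    · rw [pref_a] at hmem
      simp [xcZ, zC] at hmem
    · rw [pref_g] at hmem
      simp [yC, zC, xCr] at hmem
    · cases b'
      · rw [pref_h] at hmem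
        obtain ⟨x, -, hx⟩ := List.mem_map.1 hmem
        simp [zC] at hx
      · rfl
  subst hab
  have hZsub : (Zall : Finset (CourseZ n D)) ⊆ bundle M bApp := by
    intro c hc
    obtain ⟨z', rfl⟩ := mem_Zall.1 hc
    exact (hfeas bApp).2.2 _ (mem_bundle.2 hpM) _ (coreqZ_z z0 z')
  have hbB : bundle M bApp = (Zall : Finset (CourseZ n D)) := by
    refine (Finset.eq_of_subset_of_card_le hZsub ?_).symm
    rw [card_Zall]
    exact (hfeas bApp).2.1
  have hXfull := X_full_of_bZ lit occ lX lX' lZ hD hlX'all hPO hbB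
  have hYfull := Y_full lit occ lX lX' lZ hPO
  -- all slots equal one
  have hXs : ∀ x : XCourse n, slots M (Sum.inl x : CourseZ n D) = 1 :=
    fun x => le_antisymm (hs1 _) (hXfull x)
  have hYs : ∀ y : Fin n × Fin 2, slots M (Sum.inr (Sum.inl y) : CourseZ n D) = 1 :=
    fun y => le_antisymm (hs1 _) (hYfull y.1 y.2)
  have hZs : ∀ z : Fin D, slots M (Sum.inr (Sum.inr z) : CourseZ n D) = 1 := by
    intro z
    refine le_antisymm (hs1 _) ?_
    have hmem : (zC z : CourseZ n D) ∈ bundle M bApp := by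
      rw [hbB]; exact mem_Zall.2 ⟨z, rfl⟩
    exact slots_pos_of_mem (mem_bundle.1 hmem)
  have hcardM : M.card = 4 * n + (2 * n + D) := by
    rw [card_eq_sum_slots M, Fintype.sum_sum_type, Fintype.sum_sum_type]
    rw [Finset.sum_congr rfl (fun x _ => hXs x), Finset.sum_congr rfl (fun y _ => hYs y),
      Finset.sum_congr rfl (fun z _ => hZs z), Finset.sum_const, Finset.sum_const,
      Finset.sum_const, Finset.card_univ, Finset.card_univ, Finset.card_univ,
      smul_eq_mul, smul_eq_mul, smul_eq_mul, mul_one, mul_one, mul_one, hcX, hcY]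
    simp
  have hbsum : M.card = (∑ j : Fin m, (bundle M (aApp j)).card)
      + (∑ ip : Fin n × Bool, (bundle M (gApp ip.1 ip.2)).card)
      + ((bundle M bApp).card + (bundle M hApp).card) := by
    rw [card_eq_sum_bundle M, Fintype.sum_sum_type, Fintype.sum_sum_type, Fintype.sum_bool]
  have hbBcard : (bundle M bApp).card = D := by rw [hbB, card_Zall]
  have hbHle : (bundle M hApp).card ≤ 2 * n - m := (hfeas hApp).2.1
  have hAle : ∀ j, (bundle M (aApp j)).card ≤ 1 := fun j => (hfeas (aApp j)).2.1
  have hGle : ∀ ip : Fin n × Bool, (bundle M (gApp ip.1 ip.2)).card ≤ 2 :=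
    fun ip => (hfeas (gApp ip.1 ip.2)).2.1
  have hSAle : (∑ j : Fin m, (bundle M (aApp j)).card) ≤ m := by
    calc (∑ j : Fin m, (bundle M (aApp j)).card) ≤ ∑ _j : Fin m, 1 :=
        Finset.sum_le_sum (fun j _ => hAle j)
      _ = m := by rw [Finset.sum_const, Finset.card_univ, smul_eq_mul, mul_one, Fintype.card_fin]
  have hSGle : (∑ ip : Fin n × Bool, (bundle M (gApp ip.1 ip.2)).card) ≤ 4 * n := by
    calc (∑ ip : Fin n × Bool, (bundle M (gApp ip.1 ip.2)).card)
        ≤ ∑ _ip : Fin n × Bool, 2 := Finset.sum_le_sum (fun ip _ => hGle ip)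
      _ = 4 * n := by
        rw [Finset.sum_const, Finset.card_univ, smul_eq_mul]
        simp
        ring
  have hA1 : ∀ j, (bundle M (aApp j)).card = 1 := by
    intro j0
    by_contra hne
    have h0 : (bundle M (aApp j0)).card < 1 := lt_of_le_of_ne (hAle j0) hne
    have hSA : (∑ j : Fin m, (bundle M (aApp j)).card) < ∑ _j : Fin m, 1 :=
      Finset.sum_lt_sum (fun j _ => hAle j) ⟨j0, Finset.mem_univ _, h0⟩
    rw [Finset.sum_const, Finset.card_univ, smul_eq_mul, mul_one, Fintype.card_fin] at hSA
    omega
  have hG2 : ∀ i p, (bundle M (gApp i p)).card = 2 := by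
    intro i0 p0
    by_contra hne
    have h0 : (bundle M (gApp i0 p0)).card < 2 := lt_of_le_of_ne (hGle (i0, p0)) hne
    have hSG : (∑ ip : Fin n × Bool, (bundle M (gApp ip.1 ip.2)).card)
        < ∑ _ip : Fin n × Bool, 2 :=
      Finset.sum_lt_sum (fun ip _ => hGle ip) ⟨(i0, p0), Finset.mem_univ _, h0⟩
    rw [Finset.sum_const, Finset.card_univ, smul_eq_mul] at hSG
    have hcc : Fintype.card (Fin n × Bool) * 2 = 4 * n := by
      simp
      ring
    omega
  -- each g holds either the y-pair or its x-pair
  have hgb : ∀ i p, bundle M (gApp i p) = (yPair i : Finset (CourseZ n D))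
      ∨ bundle M (gApp i p) = (xPair i p : Finset (CourseZ n D)) := by
    intro i p
    by_cases hy : (yC i 0 : CourseZ n D) ∈ bundle M (gApp i p)
    · left
      have hy1 := (hfeas (gApp i p)).2.2 _ hy _ (coreqZ_y i 0 1)
      have hsub : (yPair i : Finset (CourseZ n D)) ⊆ bundle M (gApp i p) := by
        intro c hc
        obtain ⟨r, rfl⟩ := mem_yPair.1 hc
        fin_cases r
        · exact hy
        · exact hy1
      exact (Finset.eq_of_subset_of_card_le hsub (by rw [card_yPair, hG2 i p])).symm
    · right
      have hy1 : (yC i 1 : CourseZ n D) ∉ bundle M (gApp i p) := by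
        intro hin
        exact hy ((hfeas (gApp i p)).2.2 _ hin _ (coreqZ_y i 1 0))
      have hsub : bundle M (gApp i p) ⊆ (xPair i p : Finset (CourseZ n D)) := by
        intro c hc
        have hcp := (hfeas (gApp i p)).1 c hc
        rw [pref_g] at hcp
        simp only [List.mem_cons, List.not_mem_nil, or_false] at hcp
        rcases hcp with rfl | rfl | rfl | rfl
        · exact absurd hc hy
        · exact absurd hc hy1
        · exact mem_xPair.2 ⟨0, rfl⟩
        · exact mem_xPair.2 ⟨1, rfl⟩
      exact Finset.eq_of_subset_of_card_le hsub (by rw [card_xPair, hG2 i p])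
  -- extract a satisfying assignment
  apply hunsat
  refine ⟨fun i => decide ((yC i 0 : CourseZ n D) ∈ bundle M (gApp i true)), fun j => ?_⟩
  obtain ⟨c, hcEq⟩ := Finset.card_eq_one.1 (hA1 j)
  have hcmem : c ∈ bundle M (aApp j) := hcEq ▸ Finset.mem_singleton_self c
  have hcp := (hfeas (aApp j)).1 c hcmem
  rw [pref_a] at hcp
  simp only [List.mem_cons, List.not_mem_nil, or_false] at hcp
  obtain ⟨s, rfl⟩ : ∃ s, c = (xcZ lit occ j s : CourseZ n D) := by
    rcases hcp with rfl | rfl | rfl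
    · exact ⟨0, rfl⟩
    · exact ⟨1, rfl⟩
    · exact ⟨2, rfl⟩
  refine ⟨s, ?_⟩
  show (lit j s).2
      = decide ((yC (lit j s).1 0 : CourseZ n D) ∈ bundle M (gApp (lit j s).1 true))
  have hnotx : bundle M (gApp (lit j s).1 (lit j s).2)
      ≠ (xPair (lit j s).1 (lit j s).2 : Finset (CourseZ n D)) := by
    intro hx
    have hmemx : (xcZ lit occ j s : CourseZ n D)
        ∈ bundle M (gApp (lit j s).1 (lit j s).2) := by
      rw [hx]
      exact mem_xPair.2 ⟨occ j s, rfl⟩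
    have := uniq (mem_bundle.1 hcmem) (mem_bundle.1 hmemx)
    simp [aApp, gApp] at this
  have hyy : bundle M (gApp (lit j s).1 (lit j s).2) = (yPair (lit j s).1 : Finset (CourseZ n D)) :=
    (hgb (lit j s).1 (lit j s).2).resolve_right hnotx
  have hyin : (yC (lit j s).1 0 : CourseZ n D)
      ∈ bundle M (gApp (lit j s).1 (lit j s).2) := by
    rw [hyy]
    exact mem_yPair.2 ⟨0, rfl⟩
  rcases Bool.eq_false_or_eq_true (lit j s).2 with hp | hp
  · rw [hp] at hyin ⊢
    simp [hyin]
  · rw [hp] at hyin ⊢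
    have hnt : (yC (lit j s).1 0 : CourseZ n D) ∉ bundle M (gApp (lit j s).1 true) := by
      intro hin
      have := uniq (mem_bundle.1 hyin) (mem_bundle.1 hin)
      simp [gApp] at this
    simp [hnt]

end CACR13

/-- let `B` be a Boolean formula with clauses of size exactly three
in which every variable occurs exactly twice unnegated and twice negated (encoded
by `lit`, `occ` and the bijectivity hypothesis), let `α ≥ 1` and
`D = 6n(α−1) + 1`, and consider the constructed CACR instance (all courses of
capacity 1).  Then: (a) if `B` is satisfiable, the instance admits a Pareto
optimal matching of cardinality `D + 6n`; (b) if `B` is not satisfiable, every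
Pareto optimal matching has cardinality at most `6n`. -/
theorem cacr_gap_reduction {m n α : ℕ} (hα : 1 ≤ α)
    (lit : Fin m → Fin 3 → Fin n × Bool) (occ : Fin m → Fin 3 → Fin 2)
    (hbij : Function.Bijective
      (fun p : Fin m × Fin 3 =>
        (((lit p.1 p.2).1, (lit p.1 p.2).2, occ p.1 p.2) : Fin n × Bool × Fin 2)))
    (lX lX' : List (XCourse n)) (lZ : List (Fin (6 * n * (α - 1) + 1)))
    (hlX : lX.Nodup) (hlXall : ∀ x, x ∈ lX)
    (hlX' : lX'.Nodup) (hlX'all : ∀ x, x ∈ lX')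
    (hlZ : lZ.Nodup) (hlZall : ∀ z, z ∈ lZ) :
    ((∃ f : Fin n → Bool, ∀ j : Fin m, ∃ s : Fin 3, (lit j s).2 = f (lit j s).1) →
      ∃ M : Finset (ApplZ m n × CourseZ n (6 * n * (α - 1) + 1)),
        ParetoOptimalCR (prefZ lit occ lX lX' lZ) (qAZ m n (6 * n * (α - 1) + 1))
          (fun _ => 1) coreqZ M ∧
        M.card = (6 * n * (α - 1) + 1) + 6 * n) ∧
    ((¬ ∃ f : Fin n → Bool, ∀ j : Fin m, ∃ s : Fin 3, (lit j s).2 = f (lit j s).1) →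
      ∀ M : Finset (ApplZ m n × CourseZ n (6 * n * (α - 1) + 1)),
        ParetoOptimalCR (prefZ lit occ lX lX' lZ) (qAZ m n (6 * n * (α - 1) + 1))
          (fun _ => 1) coreqZ M →
        M.card ≤ 6 * n) := by
  have hD : 1 ≤ 6 * n * (α - 1) + 1 := by omega
  have hm : m * 3 = n * 4 := by
    have hcards := Fintype.card_of_bijective hbij
    simp [Fintype.card_prod] at hcards
    omega
  constructor
  · rintro ⟨f, hf⟩
    refine ⟨CACR13.MA lit occ hbij f, ⟨?_, ?_⟩, ?_⟩
    · exact CACR13.MA_matching lit occ hbij f lX lX' lZ hf hlXall hlX'all hlZall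
    · exact CACR13.MA_pareto lit occ hbij f lX lX' lZ hf hD hlXall hlX'all hlZall
    · rw [CACR13.card_MA]
      ring
  · intro hunsat M hPO
    exact CACR13.partB lit occ lX lX' lZ hm hD hlX'all hunsat M hPO
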